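/- Let ψ(z) = ℓ(z) + (ς/6)‖z - x̄‖³ where ℓ : ℝ^d → ℝ is affine and ς > 0, and let z* be the global minimizer of ψ. Then for all z ∈ ℝ^d, ψ(z) - ψ(z*) ≥ (ς/12)‖z - z*‖³. -/

import Mathlib

open RealInnerProductSpace

theorem key (a b s : ℝ) (ha : 0 ≤ a) (hb : 0 ≤ b)
    (h2 : s ≤ a + b) :
    0 ≤ 2*a^3 + b^3 - 3*a^2*b + 3*b*s^2 - s^3 := by
  rcases le_or_gt s (3*b) with h | h
  · nlinarith [mul_nonneg (sq_nonneg (a-b)) (by linarith : (0:ℝ) ≤ 2*a+b), mul_nonneg (sq_nonneg s) (by linarith : (0:ℝ) ≤ 3*b - s)]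
  · have hab : 3*b < a + b := lt_of_lt_of_le h h2
    have ha2b : 0 < a - 2*b := by linarith
    nlinarith [mul_nonneg (mul_nonneg ha ha) hb, mul_nonneg (mul_nonneg ha hb) hb,
      mul_nonneg (sq_nonneg (2*a - 3*b)) ha,
      mul_le_mul_of_nonneg_right (sq_le_sq' (by linarith) h2) (le_of_lt (by linarith : (0:ℝ) < s - 3*b)),
      mul_le_mul_of_nonneg_left (by linarith : s - 3*b ≤ a - 2*b) (sq_nonneg (a+b))]

set_option maxHeartbeats 1000000 in
theorem stmt_13 (d : ℕ) (c ς : ℝ) (hς : 0 < ς)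
    (b xbar zstar : EuclideanSpace ℝ (Fin d))
    (ψ : EuclideanSpace ℝ (Fin d) → ℝ)
    (hψ : ψ = fun z => (c + ⟪b, z⟫) + ς / 6 * ‖z - xbar‖ ^ 3)
    (hmin : ∀ z, ψ zstar ≤ ψ z) :
    ∀ z, ψ z - ψ zstar ≥ ς / 12 * ‖z - zstar‖ ^ 3 := by
  set v := zstar - xbar with hv
  -- derivative of the cubic norm term at zstar
  have hcube : HasFDerivAt (fun z : EuclideanSpace ℝ (Fin d) => ‖z - xbar‖ ^ (3:ℕ))
      ((3 * ‖v‖) • innerSL ℝ v) zstar := by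
    have h1 : HasFDerivAt (fun z : EuclideanSpace ℝ (Fin d) => z - xbar)
        (ContinuousLinearMap.id ℝ _) zstar := (hasFDerivAt_id zstar).sub_const xbar
    have h2 := hasFDerivAt_norm_rpow (E := EuclideanSpace ℝ (Fin d)) v
      (p := 3) (by norm_num)
    have h3 := h2.comp zstar h1
    have he : (fun z : EuclideanSpace ℝ (Fin d) => ‖z - xbar‖ ^ (3:ℕ))
        = (fun x : EuclideanSpace ℝ (Fin d) => ‖x‖ ^ (3:ℝ)) ∘ (fun z => z - xbar) := by
      funext z
      simp only [Function.comp]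
      rw [show (3:ℝ) = ((3:ℕ):ℝ) by norm_num, Real.rpow_natCast]
    rw [he]
    refine h3.congr_fderiv ?_
    ext w
    by_cases hv0 : v = 0
    · simp [hv0]
    · have : ‖v‖ ^ ((3:ℝ) - 2) = ‖v‖ := by
        norm_num
      simp [this]
  -- derivative of ψ at zstar
  have hψd : HasFDerivAt ψ (innerSL ℝ b + (ς/6 * (3 * ‖v‖)) • innerSL ℝ v) zstar := by
    rw [hψ]
    have h1 : HasFDerivAt (fun z : EuclideanSpace ℝ (Fin d) => c + ⟪b, z⟫)
        (innerSL ℝ b) zstar := ((innerSL ℝ b).hasFDerivAt).const_add c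
    have h2 := hcube.const_mul (ς/6)
    have := h1.add h2
    refine this.congr_fderiv ?_
    rw [smul_smul]
  have hloc : IsLocalMin ψ zstar := Filter.Eventually.of_forall hmin
  have hzero : (innerSL ℝ b + (ς/6 * (3 * ‖v‖)) • innerSL ℝ v) = 0 :=
    hloc.hasFDerivAt_eq_zero hψd
  intro z
  have hgrad : ⟪b, z - zstar⟫ + ς/6 * (3 * ‖v‖) * ⟪v, z - zstar⟫ = 0 := by
    have h0 := DFunLike.congr_fun hzero (z - zstar)
    simpa [mul_assoc] using h0
  set u := z - xbar with hu
  set w := z - zstar with hw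
  have huvw : u = v + w := by rw [hu, hv, hw]; abel
  have hpar : ‖u‖^2 = ‖v‖^2 + 2 * ⟪v, w⟫ + ‖w‖^2 := by
    rw [huvw]; exact norm_add_sq_real v w
  have htri : ‖w‖ ≤ ‖u‖ + ‖v‖ := by
    calc ‖w‖ = ‖u - v‖ := by rw [huvw]; congr 1; abel
    _ ≤ ‖u‖ + ‖v‖ := norm_sub_le u v
  have hQ := key ‖u‖ ‖v‖ ‖w‖ (norm_nonneg u) (norm_nonneg v) htri
  have hb : ⟪b, w⟫ = - (ς/6 * (3 * ‖v‖) * ⟪v, w⟫) := by linarith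
  have hinner : ⟪b, z⟫ - ⟪b, zstar⟫ = ⟪b, w⟫ := by
    rw [hw, inner_sub_right]
  rw [hψ]
  simp only [ge_iff_le]
  have hexp : ((c + ⟪b, z⟫) + ς / 6 * ‖z - xbar‖ ^ 3) - ((c + ⟪b, zstar⟫) + ς / 6 * ‖zstar - xbar‖ ^ 3)
      = ⟪b, w⟫ + ς/6 * (‖u‖^3 - ‖v‖^3) := by
    rw [← hinner, ← hu, ← hv]; ring
  have h2 : ⟪v, w⟫ = (‖u‖^2 - ‖v‖^2 - ‖w‖^2) / 2 := by linarith
  have hfinal : ((c + ⟪b, z⟫) + ς / 6 * ‖z - xbar‖ ^ 3) - ((c + ⟪b, zstar⟫) + ς / 6 * ‖zstar - xbar‖ ^ 3)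
      - ς/12 * ‖w‖^3
      = ς/12 * (2*‖u‖^3 + ‖v‖^3 - 3*‖u‖^2*‖v‖ + 3*‖v‖*‖w‖^2 - ‖w‖^3) := by
    linear_combination hexp + hb + (-(ς/2)*‖v‖)*h2
  have hQ' := mul_nonneg (by linarith : (0:ℝ) ≤ ς/12) hQ
  linarith [hfinal, hQ']
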